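/- Let n ≥ 9 with 3 | n, partition {1,...,n} into S_1, S_2, S_3 by residue mod 3. Let G_1 be the 3-subsets contained in one S_i and G_2 the 3-subsets with two elements in S_i and one in S_{i+1} (cyclically). Then every 4-element subset of {1,...,n} contains some element of G_1 ∪ G_2. -/

import Mathlib

open Finset

attribute [local instance] Classical.propDecidable

/-- `S_i ⊆ {1,…,n}`: the elements congruent to `i` mod 3. -/
noncomputable def resClass3 (n i : ℕ) : Finset ℕ :=
  (Finset.Icc 1 n).filter (fun x => x % 3 = i % 3)

/-- `G_1`: 3-element subsets of `{1,…,n}` contained in a single residue class mod 3. -/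
noncomputable def G1deg3 (n : ℕ) : Finset (Finset ℕ) :=
  ((Finset.Icc 1 n).powersetCard 3).filter (fun T => ∃ i ∈ Finset.Icc 1 3, T ⊆ resClass3 n i)

/-- `G_2`: 3-element subsets with two elements in `S_i` and one in `S_{i+1}` (cyclically). -/
noncomputable def G2deg3 (n : ℕ) : Finset (Finset ℕ) :=
  ((Finset.Icc 1 n).powersetCard 3).filter (fun T => ∃ i ∈ Finset.Icc 1 3,
    (T ∩ resClass3 n i).card = 2 ∧ (T ∩ resClass3 n (i + 1)).card = 1)

lemma resClass3_subset (n i : ℕ) : resClass3 n i ⊆ Finset.Icc 1 n :=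
  Finset.filter_subset _ _

lemma resClass3_disj (n i : ℕ) (hi : i ∈ Finset.Icc 1 3) :
    ∀ x, x ∈ resClass3 n i → x ∉ resClass3 n (i + 1) := by
  intro x hx hx'
  simp only [resClass3, Finset.mem_filter] at hx hx'
  obtain ⟨hl, hu⟩ := Finset.mem_Icc.mp hi
  interval_cases i <;> omega

lemma helperG2 (n : ℕ) (Q : Finset ℕ) (hQ : Q ⊆ Finset.Icc 1 n) (i : ℕ)
    (hi : i ∈ Finset.Icc 1 3) (h2 : (Q ∩ resClass3 n i).card = 2)
    (h1 : 1 ≤ (Q ∩ resClass3 n (i + 1)).card) :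
    ∃ T ∈ G2deg3 n, T ⊆ Q := by
  obtain ⟨x, hx⟩ := Finset.card_pos.mp (lt_of_lt_of_le one_pos h1)
  rw [Finset.mem_inter] at hx
  refine ⟨insert x (Q ∩ resClass3 n i), ?_, ?_⟩
  · have hxnot : x ∉ Q ∩ resClass3 n i := by
      intro hmem
      exact resClass3_disj n i hi x (Finset.mem_inter.mp hmem).2 hx.2
    have hcard : (insert x (Q ∩ resClass3 n i)).card = 3 := by
      rw [Finset.card_insert_of_notMem hxnot, h2]
    have hsub : insert x (Q ∩ resClass3 n i) ⊆ Finset.Icc 1 n := by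
      intro y hy
      rcases Finset.mem_insert.mp hy with rfl | hy
      · exact hQ hx.1
      · exact hQ (Finset.mem_inter.mp hy).1
    simp only [G2deg3, Finset.mem_filter, Finset.mem_powersetCard]
    refine ⟨⟨hsub, hcard⟩, i, hi, ?_, ?_⟩
    · have : insert x (Q ∩ resClass3 n i) ∩ resClass3 n i = Q ∩ resClass3 n i := by
        ext y
        simp only [Finset.mem_inter, Finset.mem_insert]
        constructor
        · rintro ⟨rfl | hy, hy2⟩
          · exact absurd hy2 (fun h => resClass3_disj n i hi y h hx.2)
          · exact hy
        · intro hy; exact ⟨Or.inr hy, hy.2⟩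
      rw [this, h2]
    · have : insert x (Q ∩ resClass3 n i) ∩ resClass3 n (i + 1) = {x} := by
        ext y
        simp only [Finset.mem_inter, Finset.mem_insert, Finset.mem_singleton]
        constructor
        · rintro ⟨rfl | hy, hy2⟩
          · rfl
          · exact absurd hy2 (resClass3_disj n i hi y hy.2)
        · rintro rfl; exact ⟨Or.inl rfl, hx.2⟩
      rw [this, Finset.card_singleton]
  · intro y hy
    rcases Finset.mem_insert.mp hy with rfl | hy
    · exact hx.1
    · exact (Finset.mem_inter.mp hy).1

theorem stmt16 (n : ℕ) (hn : 9 ≤ n) (h3 : 3 ∣ n) :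
    ∀ Q ∈ (Finset.Icc 1 n).powersetCard 4, ∃ T ∈ G1deg3 n ∪ G2deg3 n, T ⊆ Q := by
  intro Q hQ
  rw [Finset.mem_powersetCard] at hQ
  obtain ⟨hQsub, hQcard⟩ := hQ
  set c1 := (Q ∩ resClass3 n 1).card
  set c2 := (Q ∩ resClass3 n 2).card
  set c3 := (Q ∩ resClass3 n 3).card
  have hsum : c1 + c2 + c3 = 4 := by
    have hd12 : Disjoint (Q ∩ resClass3 n 1) (Q ∩ resClass3 n 2) := by
      rw [Finset.disjoint_left]
      intro a ha ha'
      exact resClass3_disj n 1 (by decide) a (Finset.mem_inter.mp ha).2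
        (Finset.mem_inter.mp ha').2
    have hd3 : Disjoint (Q ∩ resClass3 n 1 ∪ Q ∩ resClass3 n 2) (Q ∩ resClass3 n 3) := by
      rw [Finset.disjoint_left]
      intro a ha ha'
      have ha3 := (Finset.mem_inter.mp ha').2
      simp only [resClass3, Finset.mem_filter] at ha3
      rcases Finset.mem_union.mp ha with h | h <;>
        · have := (Finset.mem_inter.mp h).2
          simp only [resClass3, Finset.mem_filter] at this
          omega
    have hunion : (Q ∩ resClass3 n 1 ∪ Q ∩ resClass3 n 2) ∪ Q ∩ resClass3 n 3 = Q := by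
      ext y
      simp only [Finset.mem_union, Finset.mem_inter]
      constructor
      · rintro ((h | h) | h) <;> exact h.1
      · intro hy
        have hyI := hQsub hy
        have hmem : ∀ j, y % 3 = j % 3 → y ∈ resClass3 n j := fun j hj =>
          Finset.mem_filter.mpr ⟨hyI, hj⟩
        have : y % 3 = 1 ∨ y % 3 = 2 ∨ y % 3 = 0 := by omega
        rcases this with h | h | h
        · exact Or.inl (Or.inl ⟨hy, hmem 1 (by omega)⟩)
        · exact Or.inl (Or.inr ⟨hy, hmem 2 (by omega)⟩)
        · exact Or.inr ⟨hy, hmem 3 (by omega)⟩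
    have := Finset.card_union_of_disjoint hd3
    rw [hunion, Finset.card_union_of_disjoint hd12] at this
    omega
  by_cases h1 : 3 ≤ c1
  · obtain ⟨T, hTsub, hTcard⟩ := Finset.exists_subset_card_eq (s := Q ∩ resClass3 n 1) (n := 3) h1
    refine ⟨T, Finset.mem_union_left _ ?_, fun y hy => (Finset.mem_inter.mp (hTsub hy)).1⟩
    simp only [G1deg3, Finset.mem_filter, Finset.mem_powersetCard]
    exact ⟨⟨fun y hy => hQsub (Finset.mem_inter.mp (hTsub hy)).1, hTcard⟩,
      1, by decide, fun y hy => (Finset.mem_inter.mp (hTsub hy)).2⟩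
  · by_cases h2 : 3 ≤ c2
    · obtain ⟨T, hTsub, hTcard⟩ := Finset.exists_subset_card_eq (s := Q ∩ resClass3 n 2) (n := 3) h2
      refine ⟨T, Finset.mem_union_left _ ?_, fun y hy => (Finset.mem_inter.mp (hTsub hy)).1⟩
      simp only [G1deg3, Finset.mem_filter, Finset.mem_powersetCard]
      exact ⟨⟨fun y hy => hQsub (Finset.mem_inter.mp (hTsub hy)).1, hTcard⟩,
        2, by decide, fun y hy => (Finset.mem_inter.mp (hTsub hy)).2⟩
    · by_cases h3' : 3 ≤ c3
      · obtain ⟨T, hTsub, hTcard⟩ := Finset.exists_subset_card_eq (s := Q ∩ resClass3 n 3) (n := 3) h3'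
        refine ⟨T, Finset.mem_union_left _ ?_, fun y hy => (Finset.mem_inter.mp (hTsub hy)).1⟩
        simp only [G1deg3, Finset.mem_filter, Finset.mem_powersetCard]
        exact ⟨⟨fun y hy => hQsub (Finset.mem_inter.mp (hTsub hy)).1, hTcard⟩,
          3, by decide, fun y hy => (Finset.mem_inter.mp (hTsub hy)).2⟩
      · have hcases : (c1 = 2 ∧ 1 ≤ c2) ∨ (c2 = 2 ∧ 1 ≤ c3) ∨ (c3 = 2 ∧ 1 ≤ c1) := by omega
        have h41 : resClass3 n 4 = resClass3 n 1 := by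
          unfold resClass3; norm_num
        rcases hcases with ⟨ha, hb⟩ | ⟨ha, hb⟩ | ⟨ha, hb⟩
        · obtain ⟨T, hT, hTQ⟩ := helperG2 n Q hQsub 1 (by decide) ha hb
          exact ⟨T, Finset.mem_union_right _ hT, hTQ⟩
        · obtain ⟨T, hT, hTQ⟩ := helperG2 n Q hQsub 2 (by decide) ha hb
          exact ⟨T, Finset.mem_union_right _ hT, hTQ⟩
        · obtain ⟨T, hT, hTQ⟩ := helperG2 n Q hQsub 3 (by decide) ha (by rw [show (3:ℕ)+1 = 4 from rfl, h41]; exact hb)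
          exact ⟨T, Finset.mem_union_right _ hT, hTQ⟩
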